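/- Let m, ℏ > 0 and α ∈ ℝ. Let ρ : ℝ³ → ℝ be continuously differentiable with ρ > 0 everywhere, and S : ℝ³ → ℝ continuously differentiable, with ρ·|∇S|² and |∇√ρ|² integrable. Define the dilated fields ρ'(x) = e^{3α/2}·ρ(e^{α/2}·x) and S'(x) = e^{−α}·S(e^{α/2}·x). Then: (i) ∫_{ℝ³} ρ'·|∇S'|² dx = e^{−α}·∫_{ℝ³} ρ·|∇S|² dx; (ii) ∫_{ℝ³} |∇√ρ'|² dx = e^{α}·∫_{ℝ³} |∇√ρ|² dx; and consequently (iii) defining ℌ_q[ρ,S] = ∫ [ ρ|∇S|²/(2m) + (ℏ²/(2m))|∇√ρ|² ] dx and 𝔎_q[ρ,S] = ∫ [ ρ|∇S|²/(2m) − (ℏ²/(2m))|∇√ρ|² ] dx, one has ℌ_q[ρ',S'] = cosh(α)·ℌ_q[ρ,S] − sinh(α)·𝔎_q[ρ,S]. -/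

import Mathlib

open MeasureTheory InnerProductSpace

private lemma grad_smul_comp {E : Type*} [NormedAddCommGroup E] [InnerProductSpace ℝ E]
    [CompleteSpace E] (f : E → ℝ) (hf : Differentiable ℝ f) (c k : ℝ) (x : E) :
    gradient (fun y => c * f (k • y)) x = (c * k) • gradient f (k • x) := by
  have h1 : HasGradientAt f (gradient f (k • x)) (k • x) := (hf (k • x)).hasGradientAt
  have h3 : HasFDerivAt (fun y : E => f (k • y))
      ((toDual ℝ E (gradient f (k • x))).comp (k • ContinuousLinearMap.id ℝ E)) x :=
    h1.hasFDerivAt.comp x ((ContinuousLinearMap.id ℝ E).hasFDerivAt.const_smul k)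
  have h4 : HasFDerivAt (fun y : E => c * f (k • y))
      (c • ((toDual ℝ E (gradient f (k • x))).comp (k • ContinuousLinearMap.id ℝ E))) x :=
    h3.const_mul c
  have h5 : (c • ((toDual ℝ E (gradient f (k • x))).comp (k • ContinuousLinearMap.id ℝ E)))
      = toDual ℝ E ((c * k) • gradient f (k • x)) := by
    ext v
    simp [real_inner_smul_left, mul_assoc, real_inner_comm]
  rw [h5] at h4
  simpa only [LinearIsometryEquiv.symm_apply_apply] using h4.hasGradientAt.gradient

private lemma exp_sq_arith (a b c : ℝ) (h : a + (b + b) = c) :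
    Real.exp a * Real.exp b ^ 2 = Real.exp c := by
  rw [sq, ← Real.exp_add, ← Real.exp_add, h]

private lemma sqrt_exp' (t : ℝ) : Real.sqrt (Real.exp t) = Real.exp (t / 2) := by
  rw [show Real.exp t = Real.exp (t / 2) * Real.exp (t / 2) by
    rw [← Real.exp_add]; congr 1; ring]
  exact Real.sqrt_mul_self (Real.exp_nonneg _)

theorem dilatation_transformation_of_quantum_hamiltonian
    (m ℏ α : ℝ) (hm : 0 < m) (hℏ : 0 < ℏ)
    (ρ S : EuclideanSpace ℝ (Fin 3) → ℝ)
    (hρ : ContDiff ℝ 1 ρ) (hρpos : ∀ x, 0 < ρ x)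
    (hS : ContDiff ℝ 1 S)
    (hint1 : Integrable (fun x => ρ x * ‖gradient S x‖ ^ 2))
    (hint2 : Integrable (fun x => ‖gradient (fun y => Real.sqrt (ρ y)) x‖ ^ 2))
    (ρ' S' : EuclideanSpace ℝ (Fin 3) → ℝ)
    (hρ' : ∀ x, ρ' x = Real.exp (3 * α / 2) * ρ (Real.exp (α / 2) • x))
    (hS' : ∀ x, S' x = Real.exp (-α) * S (Real.exp (α / 2) • x)) :
    ((∫ x : EuclideanSpace ℝ (Fin 3), ρ' x * ‖gradient S' x‖ ^ 2)
        = Real.exp (-α) * ∫ x : EuclideanSpace ℝ (Fin 3), ρ x * ‖gradient S x‖ ^ 2)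
    ∧
    ((∫ x : EuclideanSpace ℝ (Fin 3), ‖gradient (fun y => Real.sqrt (ρ' y)) x‖ ^ 2)
        = Real.exp α * ∫ x : EuclideanSpace ℝ (Fin 3), ‖gradient (fun y => Real.sqrt (ρ y)) x‖ ^ 2)
    ∧
    ((∫ x : EuclideanSpace ℝ (Fin 3),
        (ρ' x * ‖gradient S' x‖ ^ 2 / (2 * m)
          + (ℏ ^ 2 / (2 * m)) * ‖gradient (fun y => Real.sqrt (ρ' y)) x‖ ^ 2))
      = Real.cosh α * (∫ x : EuclideanSpace ℝ (Fin 3),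
            (ρ x * ‖gradient S x‖ ^ 2 / (2 * m)
              + (ℏ ^ 2 / (2 * m)) * ‖gradient (fun y => Real.sqrt (ρ y)) x‖ ^ 2))
        - Real.sinh α * (∫ x : EuclideanSpace ℝ (Fin 3),
            (ρ x * ‖gradient S x‖ ^ 2 / (2 * m)
              - (ℏ ^ 2 / (2 * m)) * ‖gradient (fun y => Real.sqrt (ρ y)) x‖ ^ 2))) := by
  set k : ℝ := Real.exp (α / 2) with hkdef
  have hk : (0 : ℝ) < k := Real.exp_pos _
  have hSd : Differentiable ℝ S := hS.differentiable one_ne_zero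
  have hρd : Differentiable ℝ ρ := hρ.differentiable one_ne_zero
  have hsd : Differentiable ℝ (fun y => Real.sqrt (ρ y)) := fun x =>
    (hρd x).sqrt (hρpos x).ne'
  have hS'f : S' = fun y => Real.exp (-α) * S (k • y) := funext hS'
  have hρ'f : ρ' = fun y => Real.exp (3 * α / 2) * ρ (k • y) := funext hρ'
  have hk3 : (k ^ 3 : ℝ)⁻¹ = Real.exp (-(3 * α / 2)) := by
    rw [hkdef, ← Real.exp_nat_mul, ← Real.exp_neg]
    congr 1; push_cast; ring
  -- define the base integrands
  set g : EuclideanSpace ℝ (Fin 3) → ℝ := fun y => ρ y * ‖gradient S y‖ ^ 2 with hg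
  set h : EuclideanSpace ℝ (Fin 3) → ℝ := fun y => ‖gradient (fun z => Real.sqrt (ρ z)) y‖ ^ 2
    with hh
  -- pointwise identity for the kinetic term
  have heq1 : ∀ x, ρ' x * ‖gradient S' x‖ ^ 2 = Real.exp (α / 2) * g (k • x) := by
    intro x
    rw [hρ' x, hS'f, grad_smul_comp S hSd (Real.exp (-α)) k x, norm_smul, Real.norm_eq_abs,
      abs_of_pos (by positivity), mul_pow, hkdef, ← Real.exp_add]
    have e1 : Real.exp (3 * α / 2) * Real.exp (-α + α / 2) ^ 2 = Real.exp (α / 2) :=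
      exp_sq_arith _ _ _ (by ring)
    calc Real.exp (3 * α / 2) * ρ (Real.exp (α / 2) • x) *
          (Real.exp (-α + α / 2) ^ 2 * ‖gradient S (Real.exp (α / 2) • x)‖ ^ 2)
        = (Real.exp (3 * α / 2) * Real.exp (-α + α / 2) ^ 2) *
            (ρ (Real.exp (α / 2) • x) * ‖gradient S (Real.exp (α / 2) • x)‖ ^ 2) := by ring
      _ = Real.exp (α / 2) * g (k • x) := by rw [e1, hg]
  -- the rescaled sqrt function
  have hsqrt' : (fun y => Real.sqrt (ρ' y))
      = fun y => Real.exp (3 * α / 4) * (fun z => Real.sqrt (ρ z)) (k • y) := by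
    funext y
    rw [hρ' y, Real.sqrt_mul (Real.exp_nonneg _), sqrt_exp', show (3*α/2)/2 = 3*α/4 by ring]
  -- pointwise identity for the Fisher term
  have heq2 : ∀ x, ‖gradient (fun y => Real.sqrt (ρ' y)) x‖ ^ 2
      = Real.exp (5 * α / 2) * h (k • x) := by
    intro x
    rw [hsqrt', grad_smul_comp _ hsd (Real.exp (3 * α / 4)) k x, norm_smul, Real.norm_eq_abs,
      abs_of_pos (by positivity), mul_pow, hkdef, ← Real.exp_add]
    have e1 : Real.exp 0 * Real.exp (3 * α / 4 + α / 2) ^ 2 = Real.exp (5 * α / 2) :=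
      exp_sq_arith _ _ _ (by ring)
    rw [Real.exp_zero, one_mul] at e1
    rw [e1, hh]
  -- integral transformation for the kinetic term
  have I1 : (∫ x : EuclideanSpace ℝ (Fin 3), ρ' x * ‖gradient S' x‖ ^ 2)
      = Real.exp (-α) * ∫ x : EuclideanSpace ℝ (Fin 3), g x := by
    calc (∫ x : EuclideanSpace ℝ (Fin 3), ρ' x * ‖gradient S' x‖ ^ 2)
        = ∫ x : EuclideanSpace ℝ (Fin 3), Real.exp (α / 2) * g (k • x) := by
          simp only [heq1]
      _ = Real.exp (α / 2) * ∫ x : EuclideanSpace ℝ (Fin 3), g (k • x) :=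
          integral_const_mul _ _
      _ = Real.exp (α / 2) * ((k ^ 3 : ℝ)⁻¹ • ∫ x : EuclideanSpace ℝ (Fin 3), g x) := by
          rw [Measure.integral_comp_smul_of_nonneg volume g k (hR := hk.le),
            finrank_euclideanSpace_fin]
      _ = Real.exp (-α) * ∫ x : EuclideanSpace ℝ (Fin 3), g x := by
          rw [smul_eq_mul, ← mul_assoc, hk3, ← Real.exp_add]
          congr 2; ring
  -- integral transformation for the Fisher term
  have I2 : (∫ x : EuclideanSpace ℝ (Fin 3), ‖gradient (fun y => Real.sqrt (ρ' y)) x‖ ^ 2)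
      = Real.exp α * ∫ x : EuclideanSpace ℝ (Fin 3), h x := by
    calc (∫ x : EuclideanSpace ℝ (Fin 3), ‖gradient (fun y => Real.sqrt (ρ' y)) x‖ ^ 2)
        = ∫ x : EuclideanSpace ℝ (Fin 3), Real.exp (5 * α / 2) * h (k • x) := by
          simp only [heq2]
      _ = Real.exp (5 * α / 2) * ∫ x : EuclideanSpace ℝ (Fin 3), h (k • x) :=
          integral_const_mul _ _
      _ = Real.exp (5 * α / 2) * ((k ^ 3 : ℝ)⁻¹ • ∫ x : EuclideanSpace ℝ (Fin 3), h x) := by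
          rw [Measure.integral_comp_smul_of_nonneg volume h k (hR := hk.le),
            finrank_euclideanSpace_fin]
      _ = Real.exp α * ∫ x : EuclideanSpace ℝ (Fin 3), h x := by
          rw [smul_eq_mul, ← mul_assoc, hk3, ← Real.exp_add]
          congr 2; ring
  refine ⟨I1, I2, ?_⟩
  -- integrability of primed integrands
  have hintA' : Integrable (fun x : EuclideanSpace ℝ (Fin 3) => ρ' x * ‖gradient S' x‖ ^ 2) := by
    have : Integrable (fun x : EuclideanSpace ℝ (Fin 3) => Real.exp (α / 2) * g (k • x)) :=
      (hint1.comp_smul hk.ne').const_mul _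
    exact this.congr (Filter.Eventually.of_forall fun x => (heq1 x).symm)
  have hintB' : Integrable
      (fun x : EuclideanSpace ℝ (Fin 3) => ‖gradient (fun y => Real.sqrt (ρ' y)) x‖ ^ 2) := by
    have : Integrable (fun x : EuclideanSpace ℝ (Fin 3) => Real.exp (5 * α / 2) * h (k • x)) :=
      (hint2.comp_smul hk.ne').const_mul _
    exact this.congr (Filter.Eventually.of_forall fun x => (heq2 x).symm)
  -- split all the integrals
  have c2m : (2 * m : ℝ) ≠ 0 := by positivity
  rw [show (fun x : EuclideanSpace ℝ (Fin 3) =>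
      ρ' x * ‖gradient S' x‖ ^ 2 / (2 * m)
        + (ℏ ^ 2 / (2 * m)) * ‖gradient (fun y => Real.sqrt (ρ' y)) x‖ ^ 2)
      = fun x : EuclideanSpace ℝ (Fin 3) =>
        (ρ' x * ‖gradient S' x‖ ^ 2 / (2 * m))
          + ((ℏ ^ 2 / (2 * m)) * ‖gradient (fun y => Real.sqrt (ρ' y)) x‖ ^ 2) from rfl,
    integral_add (hintA'.div_const _) (hintB'.const_mul _),
    integral_add (hint1.div_const _) (hint2.const_mul _),
    integral_sub (hint1.div_const _) (hint2.const_mul _),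
    integral_div, integral_div, integral_const_mul, integral_const_mul,
    I1, I2, Real.cosh_eq, Real.sinh_eq]
  ring
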